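/- Under the stated operator setting, let 1 ≤ k ≤ min{p, n}, let λ₁ ≥ ⋯ ≥ λ_n be the Ritz values of T on Φ with Ritz basis γ₁, …, γ_n, and assume λ_k > μ_{k+1} (with the convention μ_{k+1} = μ_{r+1} if k = r). Then d_F(span{η₁, …, η_k}, Φ)² ≤ d_F(span{γ₁, …, γ_k}, span{η₁, …, η_k})² ≤ (1 + (1/4) · (μ_{k+1}/(λ_k − μ_{k+1}))²) · d_F(span{η₁, …, η_k}, Φ)². -/

import Mathlib

open scoped RealInnerProductSpace ENNReal
open Submodule Filter

set_option linter.unusedSectionVars false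
set_option maxHeartbeats 2000000
noncomputable section

variable {H : Type*} [NormedAddCommGroup H] [InnerProductSpace ℝ H] [CompleteSpace H]

/-- Orthogonal projection onto `U`, as an operator `H → H` (defined to be `0` in the
degenerate case where `U` admits no orthogonal projection). -/
noncomputable def proj (U : Submodule ℝ H) : H →L[ℝ] H := by
  classical
  exact if h : HasOrthogonalProjection U then
    (haveI := h; U.subtypeL ∘L orthogonalProjection U)
  else 0

/-- Squared Hilbert–Schmidt norm of an operator, computed in a fixed Hilbert basis of `H`. -/
noncomputable def hsNormSq (A : H →L[ℝ] H) : ℝ≥0∞ :=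
  ∑' i : (exists_hilbertBasis ℝ H).choose,
    (‖A ((exists_hilbertBasis ℝ H).choose_spec.choose i)‖₊ : ℝ≥0∞) ^ 2

/-- Hilbert–Schmidt (Frobenius) norm of an operator. -/
noncomputable def hsNorm (A : H →L[ℝ] H) : ℝ := Real.sqrt (hsNormSq A).toReal

/-- Projection distance `d_F(U, W) = ‖P_{Wᗮ} P_U‖_F`. -/
noncomputable def dF (U W : Submodule ℝ H) : ℝ := hsNorm ((proj Wᗮ) ∘L (proj U))

/-- Gap distance `d₂(U, W) = ‖P_{Wᗮ} P_U‖₂`. -/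
noncomputable def d2 (U W : Submodule ℝ H) : ℝ := ‖(proj Wᗮ) ∘L (proj U)‖




lemma proj_apply (U : Submodule ℝ H) [h : HasOrthogonalProjection U] (x : H) :
    proj U x = (orthogonalProjection U x : H) := by
  simp only [proj]
  rw [dif_pos h]
  rfl

lemma proj_mem (U : Submodule ℝ H) [HasOrthogonalProjection U] (x : H) : proj U x ∈ U := by
  rw [proj_apply]; exact (orthogonalProjection U x).2

lemma inner_sub_proj (U : Submodule ℝ H) [HasOrthogonalProjection U] (x : H) {y : H}
    (hy : y ∈ U) : ⟪y, x - proj U x⟫ = 0 := by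
  rw [proj_apply]
  have := sub_starProjection_mem_orthogonal (K := U) x
  exact ((Submodule.mem_orthogonal U _).1 this y hy)

lemma inner_proj_left (U : Submodule ℝ H) [HasOrthogonalProjection U] (x : H) {y : H}
    (hy : y ∈ U) : ⟪y, proj U x⟫ = ⟪y, x⟫ := by
  have h := inner_sub_proj U x hy
  rw [inner_sub_right] at h
  linarith

lemma proj_unique {U : Submodule ℝ H} [HasOrthogonalProjection U] {x v : H}
    (hv : v ∈ U) (ho : ∀ y ∈ U, ⟪y, x - v⟫ = 0) : proj U x = v := by
  rw [proj_apply]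
  have h2 := eq_starProjection_of_mem_of_inner_eq_zero (K := U) (u := x) hv
    (fun y hy => by rw [real_inner_comm]; exact ho y hy)
  exact h2

lemma proj_eq_self (U : Submodule ℝ H) [HasOrthogonalProjection U] {x : H} (hx : x ∈ U) :
    proj U x = x :=
  proj_unique hx (fun y _ => by simp)

lemma norm_sq_proj_add (U : Submodule ℝ H) [HasOrthogonalProjection U] (x : H) :
    ‖proj U x‖ ^ 2 + ‖x - proj U x‖ ^ 2 = ‖x‖ ^ 2 := by
  have h : ⟪proj U x, x - proj U x⟫ = 0 := inner_sub_proj U x (proj_mem U x)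
  have := norm_add_sq_real (proj U x) (x - proj U x)
  simp only [h, mul_zero, add_zero] at this
  rw [show proj U x + (x - proj U x) = x by abel] at this
  linarith

lemma proj_orthogonal (U : Submodule ℝ H) [HasOrthogonalProjection U] (x : H) :
    proj Uᗮ x = x - proj U x := by
  refine proj_unique ((Submodule.mem_orthogonal U _).2 ?_) ?_
  · intro u hu
    exact inner_sub_proj U x hu
  · intro y hy
    have hxy : x - (x - proj U x) = proj U x := by abel
    rw [hxy, real_inner_comm]
    exact ((Submodule.mem_orthogonal U y).1 hy _ (proj_mem U x))

lemma inner_span_zero {S : Set H} {z : H} (h : ∀ v ∈ S, ⟪v, z⟫ = 0) :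
    ∀ y ∈ span ℝ S, ⟪y, z⟫ = 0 := by
  intro y hy
  induction hy using Submodule.span_induction with
  | mem v hv => exact h v hv
  | zero => simp
  | add a b _ _ ha hb => rw [inner_add_left, ha, hb]; ring
  | smul c a _ ha => rw [real_inner_smul_left, ha]; ring

lemma mem_orthogonal_span {S : Set H} {z : H} (h : ∀ v ∈ S, ⟪v, z⟫ = 0) :
    z ∈ (span ℝ S)ᗮ := by
  rw [Submodule.mem_orthogonal]
  exact inner_span_zero h


lemma proj_span_orthonormal (s : Finset ℕ) (u : ℕ → H)
    (hon : ∀ i ∈ s, ∀ j ∈ s, ⟪u i, u j⟫ = if i = j then (1:ℝ) else 0)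
    [HasOrthogonalProjection (span ℝ (u '' ↑s))] (x : H) :
    proj (span ℝ (u '' ↑s)) x = ∑ i ∈ s, ⟪u i, x⟫ • u i := by
  refine proj_unique ?_ ?_
  · exact Submodule.sum_mem _ (fun i hi =>
      Submodule.smul_mem _ _ (subset_span ⟨i, hi, rfl⟩))
  · intro y hy
    refine inner_span_zero ?_ y hy
    rintro v ⟨i, hi, rfl⟩
    rw [Finset.mem_coe] at hi
    rw [inner_sub_right, inner_sum]
    have : ∀ j ∈ s, ⟪u i, ⟪u j, x⟫ • u j⟫ = if j = i then ⟪u i, x⟫ else 0 := by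
      intro j hj
      rw [real_inner_smul_right, hon i hi j hj]
      by_cases h : j = i
      · subst h; simp
      · simp [h, Ne.symm h]
    rw [Finset.sum_congr rfl this, Finset.sum_ite_eq' s i (fun _ => ⟪u i, x⟫), if_pos hi]
    ring

lemma dF_sq_eq_sum (W : Submodule ℝ H) [HasOrthogonalProjection Wᗮ]
    (s : Finset ℕ) (u : ℕ → H)
    (hon : ∀ i ∈ s, ∀ j ∈ s, ⟪u i, u j⟫ = if i = j then (1:ℝ) else 0) :
    dF (span ℝ (u '' ↑s)) W ^ 2 = ∑ i ∈ s, ‖proj Wᗮ (u i)‖ ^ 2 := by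
  haveI : FiniteDimensional ℝ (span ℝ (u '' (↑s : Set ℕ))) :=
    FiniteDimensional.span_of_finite ℝ ((s.finite_toSet).image u)
  set U := span ℝ (u '' (↑s : Set ℕ)) with hU
  set A := (proj Wᗮ) ∘L (proj U) with hA
  set P : ℕ → H := fun i => proj Wᗮ (u i) with hP
  set ι := (exists_hilbertBasis ℝ H).choose with hι
  set b := (exists_hilbertBasis ℝ H).choose_spec.choose with hbdef
  have hAe : ∀ e : H, A e = ∑ i ∈ s, ⟪u i, e⟫ • P i := by
    intro e
    rw [hA, ContinuousLinearMap.comp_apply, proj_span_orthonormal s u hon e, map_sum]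
    exact Finset.sum_congr rfl (fun i _ => by rw [map_smul])
  have hnorm : ∀ e : H, ‖A e‖^2 = ∑ i ∈ s, ∑ j ∈ s, (⟪u i, e⟫ * ⟪u j, e⟫) * ⟪P i, P j⟫ := by
    intro e
    rw [← real_inner_self_eq_norm_sq, hAe]
    simp only [sum_inner, inner_sum, real_inner_smul_left, real_inner_smul_right]
    exact Finset.sum_congr rfl (fun i _ => Finset.sum_congr rfl (fun j _ => by rw [real_inner_comm (P j) (P i)]; ring))
  have hkey : HasSum (fun β : ι => ‖A (b β)‖^2) (∑ i ∈ s, ‖P i‖^2) := by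
    have h1 : ∀ i ∈ s, ∀ j ∈ s,
        HasSum (fun β : ι => (⟪u i, b β⟫ * ⟪u j, b β⟫) * ⟪P i, P j⟫)
          (⟪u i, u j⟫ * ⟪P i, P j⟫) := by
      intro i _ j _
      have h2 := (b.hasSum_inner_mul_inner (u i) (u j)).mul_right ⟪P i, P j⟫
      convert h2 using 2 with β
      · rfl
      · rw [real_inner_comm (b β) (u j)]
    have h3 : HasSum (fun β : ι => ∑ i ∈ s, ∑ j ∈ s, (⟪u i, b β⟫ * ⟪u j, b β⟫) * ⟪P i, P j⟫)
        (∑ i ∈ s, ∑ j ∈ s, ⟪u i, u j⟫ * ⟪P i, P j⟫) :=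
      hasSum_sum (fun i hi => hasSum_sum (fun j hj => h1 i hi j hj))
    have h4 : (∑ i ∈ s, ∑ j ∈ s, ⟪u i, u j⟫ * ⟪P i, P j⟫) = ∑ i ∈ s, ‖P i‖^2 := by
      refine Finset.sum_congr rfl (fun i hi => ?_)
      have : ∀ j ∈ s, ⟪u i, u j⟫ * ⟪P i, P j⟫ = if j = i then ‖P i‖^2 else 0 := by
        intro j hj
        rw [hon i hi j hj]
        by_cases h : j = i
        · subst h; simp [real_inner_self_eq_norm_sq]
        · simp [h, Ne.symm h]
      rw [Finset.sum_congr rfl this, Finset.sum_ite_eq' s i (fun _ => ‖P i‖^2), if_pos hi]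
    have h5 : (fun β : ι => ‖A (b β)‖ ^ 2)
        = (fun β : ι => ∑ i ∈ s, ∑ j ∈ s, (⟪u i, b β⟫ * ⟪u j, b β⟫) * ⟪P i, P j⟫) :=
      funext (fun β => hnorm (b β))
    rw [h5, ← h4]
    exact h3
  have hofr : ∀ β : ι, ((‖A (b β)‖₊ : ℝ≥0∞))^2 = ENNReal.ofReal (‖A (b β)‖^2) := by
    intro β
    rw [ENNReal.ofReal_pow (norm_nonneg _), ← coe_nnnorm, ENNReal.ofReal_coe_nnreal]
  have hsq : hsNormSq A = ENNReal.ofReal (∑ i ∈ s, ‖P i‖^2) := by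
    rw [hsNormSq, tsum_congr hofr,
      ← ENNReal.ofReal_tsum_of_nonneg (fun β => sq_nonneg _) hkey.summable, hkey.tsum_eq]
  have hnn : (0:ℝ) ≤ ∑ i ∈ s, ‖P i‖^2 := Finset.sum_nonneg (fun i _ => sq_nonneg _)
  rw [dF, hsNorm, ← hA, hsq, ENNReal.toReal_ofReal hnn]
  exact Real.sq_sqrt hnn



lemma norm_sq_sum_orthonormal (s : Finset ℕ) (u : ℕ → H)
    (hon : ∀ i ∈ s, ∀ j ∈ s, ⟪u i, u j⟫ = if i = j then (1:ℝ) else 0) (c : ℕ → ℝ) :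
    ‖∑ i ∈ s, c i • u i‖ ^ 2 = ∑ i ∈ s, (c i) ^ 2 := by
  rw [← real_inner_self_eq_norm_sq]
  simp only [sum_inner, inner_sum, real_inner_smul_left, real_inner_smul_right]
  refine Finset.sum_congr rfl (fun i hi => ?_)
  rw [Finset.sum_eq_single i]
  · rw [hon i hi i hi, if_pos rfl]; ring
  · intro j hj hji
    rw [hon j hj i hi, if_neg hji]; ring
  · intro h; exact absurd hi h

lemma psd_cs (T : H →L[ℝ] H) (hTsa : ∀ x y : H, ⟪T x, y⟫ = ⟪x, T y⟫)
    (hTpos : ∀ u : H, 0 ≤ ⟪u, T u⟫) (x y : H) :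
    ⟪x, T y⟫ ^ 2 ≤ ⟪x, T x⟫ * ⟪y, T y⟫ := by
  have key : ∀ t : ℝ, 0 ≤ ⟪y, T y⟫ * (t * t) + (2 * ⟪x, T y⟫) * t + ⟪x, T x⟫ := by
    intro t
    have h0 := hTpos (x + t • y)
    have h1 : ⟪y, T x⟫ = ⟪x, T y⟫ := by
      rw [← hTsa x y, real_inner_comm]
    have hexp : ⟪x + t • y, T (x + t • y)⟫
        = ⟪y, T y⟫ * (t * t) + (2 * ⟪x, T y⟫) * t + ⟪x, T x⟫ := by
      rw [map_add, map_smul]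
      simp only [inner_add_left, inner_add_right, real_inner_smul_left, real_inner_smul_right]
      rw [h1]; ring
    rw [hexp] at h0
    exact h0
  have hd := discrim_le_zero key
  rw [discrim] at hd
  nlinarith [hd]

/-- Improved eigenspace bound:
`d_F(E₁ₖ, Φ)² ≤ d_F(Γ₁ₖ, E₁ₖ)² ≤ (1 + (1/4)(μ_{k+1}/(λ_k − μ_{k+1}))²) d_F(E₁ₖ, Φ)²`. -/
theorem stmt8 {H : Type*} [NormedAddCommGroup H] [InnerProductSpace ℝ H] [CompleteSpace H]
    (T : H →L[ℝ] H)
    (hTsa : ∀ x y : H, ⟪T x, y⟫ = ⟪x, T y⟫)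
    (hTpos : ∀ u : H, 0 ≤ ⟪u, T u⟫)
    (r : ℕ) (hr : 1 ≤ r) (η : ℕ → H) (μ : ℕ → ℝ)
    (hη : ∀ i ∈ Set.Icc 1 r, ∀ j ∈ Set.Icc 1 r, ⟪η i, η j⟫ = if i = j then (1 : ℝ) else 0)
    (hTeig : ∀ i ∈ Set.Icc 1 r, T (η i) = μ i • η i)
    (hμmono : ∀ i ∈ Set.Icc 1 (r + 1), ∀ j ∈ Set.Icc 1 (r + 1), i ≤ j → μ j ≤ μ i)
    (hμr : 0 < μ r) (hμr1 : 0 ≤ μ (r + 1))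
    (hTinv : ∀ w ∈ (span ℝ (η '' Set.Icc 1 r))ᗮ, T w ∈ (span ℝ (η '' Set.Icc 1 r))ᗮ)
    (hTres : ∀ w ∈ (span ℝ (η '' Set.Icc 1 r))ᗮ, ⟪w, T w⟫ ≤ μ (r + 1) * ‖w‖ ^ 2)
    (n : ℕ) (Φ : Submodule ℝ H) (hΦfd : FiniteDimensional ℝ Φ) (hΦn : Module.finrank ℝ Φ = n)
    (lam : ℕ → ℝ) (γ : ℕ → H)
    (hγ : ∀ i ∈ Set.Icc 1 n, ∀ j ∈ Set.Icc 1 n, ⟪γ i, γ j⟫ = if i = j then (1 : ℝ) else 0)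
    (hγspan : span ℝ (γ '' Set.Icc 1 n) = Φ)
    (hγeig : ∀ i ∈ Set.Icc 1 n, proj Φ (T (γ i)) = lam i • γ i)
    (hlam : ∀ i ∈ Set.Icc 1 n, ∀ j ∈ Set.Icc 1 n, i ≤ j → lam j ≤ lam i)
    (hlin : LinearIndependent ℝ (fun i : Set.Icc 1 (min n r) => proj Φ (η i.1)))
    (k : ℕ) (hk1 : 1 ≤ k) (hkp : k ≤ min n r)
    (hgap : μ (k + 1) < lam k) :
    dF (span ℝ (η '' Set.Icc 1 k)) Φ ^ 2 ≤
        dF (span ℝ (γ '' Set.Icc 1 k)) (span ℝ (η '' Set.Icc 1 k)) ^ 2 ∧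
      dF (span ℝ (γ '' Set.Icc 1 k)) (span ℝ (η '' Set.Icc 1 k)) ^ 2 ≤
        (1 + (1 / 4) * (μ (k + 1) / (lam k - μ (k + 1))) ^ 2) *
          dF (span ℝ (η '' Set.Icc 1 k)) Φ ^ 2 := by
  classical
  have hkn : k ≤ n := le_trans hkp (min_le_left n r)
  have hkr : k ≤ r := le_trans hkp (min_le_right n r)
  -- spans with Finset coercions
  have hEspan : span ℝ (η '' Set.Icc 1 k) = span ℝ (η '' ↑(Finset.Icc 1 k)) := by
    rw [Finset.coe_Icc]
  have hGspan : span ℝ (γ '' Set.Icc 1 k) = span ℝ (γ '' ↑(Finset.Icc 1 k)) := by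
    rw [Finset.coe_Icc]
  have hΦspan : span ℝ (γ '' ↑(Finset.Icc 1 n)) = Φ := by
    rw [Finset.coe_Icc]; exact hγspan
  set E := span ℝ (η '' Set.Icc 1 k) with hEdef
  set G := span ℝ (γ '' Set.Icc 1 k) with hGdef
  haveI hEfd : FiniteDimensional ℝ E :=
    FiniteDimensional.span_of_finite ℝ ((Set.finite_Icc 1 k).image η)
  haveI hGfd : FiniteDimensional ℝ G :=
    FiniteDimensional.span_of_finite ℝ ((Set.finite_Icc 1 k).image γ)
  -- orthonormality on finsets
  have hη' : ∀ i ∈ Finset.Icc 1 k, ∀ j ∈ Finset.Icc 1 k,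
      ⟪η i, η j⟫ = if i = j then (1:ℝ) else 0 := by
    intro i hi j hj
    rw [Finset.mem_Icc] at hi hj
    exact hη i (Set.mem_Icc.2 ⟨hi.1, le_trans hi.2 hkr⟩) j (Set.mem_Icc.2 ⟨hj.1, le_trans hj.2 hkr⟩)
  have hγ' : ∀ i ∈ Finset.Icc 1 n, ∀ j ∈ Finset.Icc 1 n,
      ⟪γ i, γ j⟫ = if i = j then (1:ℝ) else 0 := by
    intro i hi j hj
    rw [Finset.mem_Icc] at hi hj
    exact hγ i (Set.mem_Icc.2 hi) j (Set.mem_Icc.2 hj)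
  have hγk : ∀ i ∈ Finset.Icc 1 k, ∀ j ∈ Finset.Icc 1 k,
      ⟪γ i, γ j⟫ = if i = j then (1:ℝ) else 0 := by
    intro i hi j hj
    rw [Finset.mem_Icc] at hi hj
    exact hγ' i (Finset.mem_Icc.2 ⟨hi.1, le_trans hi.2 hkn⟩) j
      (Finset.mem_Icc.2 ⟨hj.1, le_trans hj.2 hkn⟩)
  -- memberships
  have hηE : ∀ i ∈ Finset.Icc 1 k, η i ∈ E := by
    intro i hi
    exact subset_span ⟨i, Set.mem_Icc.2 (Finset.mem_Icc.1 hi), rfl⟩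
  have hγΦ : ∀ j ∈ Finset.Icc 1 n, γ j ∈ Φ := by
    intro j hj
    rw [← hΦspan]
    exact subset_span ⟨j, Finset.mem_coe.2 hj, rfl⟩
  -- projection formulas
  have hprojΦ : ∀ x : H, proj Φ x = ∑ j ∈ Finset.Icc 1 n, ⟪γ j, x⟫ • γ j := by
    intro x
    rw [← hΦspan]
    haveI : FiniteDimensional ℝ (span ℝ (γ '' ↑(Finset.Icc 1 n))) :=
      FiniteDimensional.span_of_finite ℝ (((Finset.Icc 1 n).finite_toSet).image γ)
    exact proj_span_orthonormal (Finset.Icc 1 n) γ hγ' x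
  have hprojE : ∀ x : H, proj E x = ∑ i ∈ Finset.Icc 1 k, ⟪η i, x⟫ • η i := by
    intro x
    rw [hEspan]
    haveI : FiniteDimensional ℝ (span ℝ (η '' ↑(Finset.Icc 1 k))) :=
      FiniteDimensional.span_of_finite ℝ (((Finset.Icc 1 k).finite_toSet).image η)
    exact proj_span_orthonormal (Finset.Icc 1 k) η hη' x
  -- norms of units
  have hηnorm : ∀ i ∈ Finset.Icc 1 k, ‖η i‖ ^ 2 = 1 := by
    intro i hi
    rw [← real_inner_self_eq_norm_sq, hη' i hi i hi, if_pos rfl]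
  have hγnorm : ∀ j ∈ Finset.Icc 1 n, ‖γ j‖ ^ 2 = 1 := by
    intro j hj
    rw [← real_inner_self_eq_norm_sq, hγ' j hj j hj, if_pos rfl]
  -- squared norms of projections
  have hnormΦ : ∀ x : H, ‖proj Φ x‖ ^ 2 = ∑ j ∈ Finset.Icc 1 n, ⟪γ j, x⟫ ^ 2 := by
    intro x; rw [hprojΦ]; exact norm_sq_sum_orthonormal _ _ hγ' _
  have hnormE : ∀ x : H, ‖proj E x‖ ^ 2 = ∑ i ∈ Finset.Icc 1 k, ⟪η i, x⟫ ^ 2 := by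
    intro x; rw [hprojE]; exact norm_sq_sum_orthonormal _ _ hη' _
  -- dF formulas
  have hperpnorm : ∀ (W : Submodule ℝ H) (_ : HasOrthogonalProjection W) (x : H),
      ‖proj Wᗮ x‖ ^ 2 = ‖x‖ ^ 2 - ‖proj W x‖ ^ 2 := by
    intro W hW x
    rw [proj_orthogonal W x]
    have := norm_sq_proj_add W x
    linarith
  have hdFEΦ : dF E Φ ^ 2
      = ∑ i ∈ Finset.Icc 1 k, (1 - ∑ j ∈ Finset.Icc 1 n, ⟪γ j, η i⟫ ^ 2) := by
    rw [hEspan, dF_sq_eq_sum Φ (Finset.Icc 1 k) η hη']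
    refine Finset.sum_congr rfl (fun i hi => ?_)
    rw [hperpnorm Φ inferInstance (η i), hηnorm i hi, hnormΦ (η i)]
  have hdFGE : dF G E ^ 2
      = ∑ j ∈ Finset.Icc 1 k, (1 - ∑ i ∈ Finset.Icc 1 k, ⟪γ j, η i⟫ ^ 2) := by
    rw [hGspan, dF_sq_eq_sum E (Finset.Icc 1 k) γ hγk]
    refine Finset.sum_congr rfl (fun j hj => ?_)
    rw [hperpnorm E inferInstance (γ j), hγnorm j (Finset.mem_Icc.2
      ⟨(Finset.mem_Icc.1 hj).1, le_trans (Finset.mem_Icc.1 hj).2 hkn⟩), hnormE (γ j)]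
    congr 1
    exact Finset.sum_congr rfl (fun i _ => by rw [real_inner_comm])
  -- split of inner sum
  have hsplitIcc : Finset.Icc 1 n = Finset.Icc 1 k ∪ Finset.Ioc k n := by
    ext a; simp only [Finset.mem_Icc, Finset.mem_Ioc, Finset.mem_union]; omega
  have hdisj : Disjoint (Finset.Icc 1 k) (Finset.Ioc k n) := by
    rw [Finset.disjoint_left]
    intro a h1 h2
    rw [Finset.mem_Icc] at h1; rw [Finset.mem_Ioc] at h2; omega
  set R := ∑ i ∈ Finset.Icc 1 k, (1 - ∑ j ∈ Finset.Icc 1 n, ⟪γ j, η i⟫ ^ 2) with hRdef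
  set Sv := ∑ i ∈ Finset.Icc 1 k, ∑ j ∈ Finset.Ioc k n, ⟪γ j, η i⟫ ^ 2 with hSdef
  have hsplitsum : ∀ i : ℕ, ∑ j ∈ Finset.Icc 1 n, ⟪γ j, η i⟫ ^ 2
      = ∑ j ∈ Finset.Icc 1 k, ⟪γ j, η i⟫ ^ 2 + ∑ j ∈ Finset.Ioc k n, ⟪γ j, η i⟫ ^ 2 := by
    intro i
    rw [hsplitIcc, Finset.sum_union hdisj]
  have hkey0 : dF G E ^ 2 = R + Sv := by
    have e1 : R + Sv = ∑ i ∈ Finset.Icc 1 k, (1 - ∑ j ∈ Finset.Icc 1 k, ⟪γ j, η i⟫ ^ 2) := by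
      rw [hRdef, hSdef, ← Finset.sum_add_distrib]
      refine Finset.sum_congr rfl (fun i _ => ?_)
      rw [hsplitsum i]; ring
    have e2 : ∑ i ∈ Finset.Icc 1 k, (1 - ∑ j ∈ Finset.Icc 1 k, ⟪γ j, η i⟫ ^ 2)
        = ∑ j ∈ Finset.Icc 1 k, (1 - ∑ i ∈ Finset.Icc 1 k, ⟪γ j, η i⟫ ^ 2) := by
      rw [Finset.sum_sub_distrib, Finset.sum_sub_distrib]
      congr 1
      exact Finset.sum_comm
    rw [hdFGE, e1]
    exact e2.symm
  have hSnonneg : 0 ≤ Sv :=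
    Finset.sum_nonneg (fun i _ => Finset.sum_nonneg (fun j _ => sq_nonneg _))
  have hRnonneg : 0 ≤ R := by
    rw [← hdFEΦ]
    positivity
  constructor
  · rw [hkey0, hdFEΦ]; linarith
  · -- main inequality
    set θ : ℝ := μ (k + 1) / 2 with hθdef
    set gp : ℝ := lam k - μ (k + 1) with hgpdef
    have hμ'0 : 0 ≤ μ (k + 1) := by
      rcases eq_or_lt_of_le hkr with h | h
      · rw [h]; exact hμr1
      · have := hμmono (k+1) (Set.mem_Icc.2 ⟨by omega, by omega⟩) r
          (Set.mem_Icc.2 ⟨hr, by omega⟩) (by omega)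
        linarith
    have hgp0 : 0 < gp := by rw [hgpdef]; linarith
    have hmain : Sv * gp ^ 2 ≤ θ ^ 2 * R := by
      have hθ0 : 0 ≤ θ := by rw [hθdef]; linarith
      have hημ : ∀ i ∈ Finset.Icc 1 r, ∀ j ∈ Finset.Icc 1 r,
          ⟪η i, η j⟫ = if i = j then (1:ℝ) else 0 := by
        intro i hi j hj
        rw [Finset.mem_Icc] at hi hj
        exact hη i (Set.mem_Icc.2 hi) j (Set.mem_Icc.2 hj)
      have hEperp_iff : ∀ z : H, z ∈ Eᗮ ↔ ∀ i ∈ Finset.Icc 1 k, ⟪η i, z⟫ = 0 := by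
        intro z
        constructor
        · intro hz i hi
          exact (Submodule.mem_orthogonal E z).1 hz _ (hηE i hi)
        · intro hz
          rw [hEdef]
          apply mem_orthogonal_span
          rintro x ⟨i, hi, rfl⟩
          exact hz i (Finset.mem_Icc.2 (Set.mem_Icc.1 hi))
      have hTeig' : ∀ i ∈ Finset.Icc 1 k, T (η i) = μ i • η i := by
        intro i hi
        rw [Finset.mem_Icc] at hi
        exact hTeig i (Set.mem_Icc.2 ⟨hi.1, le_trans hi.2 hkr⟩)
      have hTE : ∀ x ∈ E, T x ∈ E := by
        intro x hx
        rw [hEdef] at hx ⊢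
        induction hx using Submodule.span_induction with
        | mem y hy =>
          obtain ⟨i, hi, rfl⟩ := hy
          rw [hTeig i (Set.mem_Icc.2 ⟨(Set.mem_Icc.1 hi).1,
            le_trans (Set.mem_Icc.1 hi).2 hkr⟩)]
          exact Submodule.smul_mem _ _ (subset_span ⟨i, hi, rfl⟩)
        | zero => simp
        | add a b _ _ ha hb => rw [map_add]; exact add_mem ha hb
        | smul c a _ ha => rw [map_smul]; exact Submodule.smul_mem _ _ ha
      have hTEperp : ∀ z ∈ Eᗮ, T z ∈ Eᗮ := by
        intro z hz
        refine (hEperp_iff _).2 (fun i hi => ?_)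
        rw [← hTsa (η i) z, hTeig' i hi, real_inner_smul_left,
          (hEperp_iff z).1 hz i hi, mul_zero]
      have hμmono' : ∀ i ∈ Finset.Icc (k+1) (r+1), μ i ≤ μ (k+1) := by
        intro i hi
        rw [Finset.mem_Icc] at hi
        exact hμmono (k+1) (Set.mem_Icc.2 ⟨by omega, by omega⟩) i
          (Set.mem_Icc.2 ⟨by omega, hi.2⟩) hi.1
      have hRay : ∀ z ∈ Eᗮ, ⟪z, T z⟫ ≤ μ (k+1) * ‖z‖ ^ 2 := by
        intro z hz
        have hIoc_sub : Finset.Ioc k r ⊆ Finset.Icc 1 r := by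
          intro a ha; rw [Finset.mem_Ioc] at ha; rw [Finset.mem_Icc]; omega
        have hηIoc : ∀ i ∈ Finset.Ioc k r, ∀ j ∈ Finset.Ioc k r,
            ⟪η i, η j⟫ = if i = j then (1:ℝ) else 0 :=
          fun i hi j hj => hημ i (hIoc_sub hi) j (hIoc_sub hj)
        set zm := ∑ i ∈ Finset.Ioc k r, ⟪η i, z⟫ • η i with hzm
        have hηinner_zt : ∀ m ∈ Finset.Icc 1 r, ⟪η m, z - zm⟫ = 0 := by
          intro m hm
          rw [inner_sub_right, hzm, inner_sum]
          simp only [real_inner_smul_right]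
          by_cases hmk : m ≤ k
          · have h1 : ⟪η m, z⟫ = 0 := (hEperp_iff z).1 hz m
              (Finset.mem_Icc.2 ⟨(Finset.mem_Icc.1 hm).1, hmk⟩)
            have h2 : ∀ i ∈ Finset.Ioc k r, ⟪η i, z⟫ * ⟪η m, η i⟫ = 0 := by
              intro i hi
              rw [hημ m hm i (hIoc_sub hi),
                if_neg (by rw [Finset.mem_Ioc] at hi; omega), mul_zero]
            rw [Finset.sum_congr rfl h2, Finset.sum_const_zero, h1, sub_zero]
          · have hmIoc : m ∈ Finset.Ioc k r :=
              Finset.mem_Ioc.2 ⟨by omega, (Finset.mem_Icc.1 hm).2⟩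
            rw [Finset.sum_eq_single m]
            · rw [hημ m hm m hm, if_pos rfl, mul_one, sub_self]
            · intro i hi hne
              rw [hημ m hm i (hIoc_sub hi), if_neg (Ne.symm hne), mul_zero]
            · intro hc; exact absurd hmIoc hc
        have hzt_perp : z - zm ∈ (span ℝ (η '' Set.Icc 1 r))ᗮ := by
          apply mem_orthogonal_span
          rintro x ⟨m, hm, rfl⟩
          exact hηinner_zt m (Finset.mem_Icc.2 (Set.mem_Icc.1 hm))
        have hTzm : T zm = ∑ i ∈ Finset.Ioc k r, (μ i * ⟪η i, z⟫) • η i := by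
          rw [hzm, map_sum]
          refine Finset.sum_congr rfl (fun i hi => ?_)
          rw [map_smul, hTeig i (Set.mem_Icc.2 ⟨by
            have := (Finset.mem_Ioc.1 hi); omega, (Finset.mem_Ioc.1 hi).2⟩)]
          rw [smul_smul, mul_comm]
        have hzm_zt : ⟪zm, z - zm⟫ = 0 := by
          rw [hzm, sum_inner]
          refine Finset.sum_eq_zero (fun i hi => ?_)
          rw [real_inner_smul_left, hηinner_zt i (hIoc_sub hi), mul_zero]
        have hzt_Tzm : ⟪z - zm, T zm⟫ = 0 := by
          rw [hTzm, inner_sum]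
          refine Finset.sum_eq_zero (fun i hi => ?_)
          rw [real_inner_smul_right, real_inner_comm (η i) (z - zm),
            hηinner_zt i (hIoc_sub hi), mul_zero]
        have hzm_Tzt : ⟪zm, T (z - zm)⟫ = 0 := by
          rw [← hTsa, hTzm, sum_inner]
          refine Finset.sum_eq_zero (fun i hi => ?_)
          rw [real_inner_smul_left, hηinner_zt i (hIoc_sub hi), mul_zero]
        have hzm_Tzm : ⟪zm, T zm⟫ ≤ μ (k+1) * ‖zm‖ ^ 2 := by
          have he1 : ⟪zm, T zm⟫ = ∑ i ∈ Finset.Ioc k r, μ i * ⟪η i, z⟫ ^ 2 := by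
            rw [hTzm, hzm, sum_inner]
            simp only [real_inner_smul_left, inner_sum, real_inner_smul_right]
            refine Finset.sum_congr rfl (fun i hi => ?_)
            rw [Finset.sum_eq_single i]
            · rw [hηIoc i hi i hi, if_pos rfl]; ring
            · intro j hj hne
              rw [hηIoc i hi j hj, if_neg (Ne.symm hne)]; ring
            · intro hc; exact absurd hi hc
          have he2 : ‖zm‖ ^ 2 = ∑ i ∈ Finset.Ioc k r, ⟪η i, z⟫ ^ 2 := by
            rw [hzm]; exact norm_sq_sum_orthonormal _ _ hηIoc _
          rw [he1, he2, Finset.mul_sum]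
          refine Finset.sum_le_sum (fun i hi => ?_)
          have := hμmono' i (by rw [Finset.mem_Icc]; rw [Finset.mem_Ioc] at hi; omega)
          nlinarith [sq_nonneg (⟪η i, z⟫ : ℝ)]
        have hzt_Tzt : ⟪z - zm, T (z - zm)⟫ ≤ μ (k+1) * ‖z - zm‖ ^ 2 := by
          refine le_trans (hTres _ hzt_perp) ?_
          have := hμmono' (r+1) (by rw [Finset.mem_Icc]; omega)
          nlinarith [sq_nonneg ‖z - zm‖]
        have hnorm_add : ‖z‖ ^ 2 = ‖zm‖ ^ 2 + ‖z - zm‖ ^ 2 := by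
          have := norm_add_sq_real zm (z - zm)
          rw [show zm + (z - zm) = z by abel, hzm_zt] at this
          linarith
        have hdecomp : ⟪z, T z⟫
            = ⟪zm, T zm⟫ + ⟪zm, T (z - zm)⟫ + (⟪z - zm, T zm⟫ + ⟪z - zm, T (z - zm)⟫) := by
          have hz' : z = zm + (z - zm) := by abel
          calc ⟪z, T z⟫ = ⟪zm + (z - zm), T (zm + (z - zm))⟫ := by rw [← hz']
          _ = _ := by rw [map_add, inner_add_left, inner_add_right, inner_add_right]
        rw [hdecomp, hnorm_add]
        rw [hzm_Tzt, hzt_Tzm]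
        linarith
      have hcontr : ∀ z ∈ Eᗮ, ‖T z - θ • z‖ ≤ θ * ‖z‖ := by
        intro z hz
        have hTz2 : ‖T z‖ ^ 2 ≤ μ (k+1) * ⟪z, T z⟫ := by
          have hcs := psd_cs T hTsa hTpos z (T z)
          have h1 : ⟪z, T (T z)⟫ = ‖T z‖ ^ 2 := by
            rw [← hTsa]; exact real_inner_self_eq_norm_sq _
          have h2 : ⟪T z, T (T z)⟫ ≤ μ (k+1) * ‖T z‖ ^ 2 := hRay (T z) (hTEperp z hz)
          by_cases hz0 : ‖T z‖ = 0
          · rw [hz0]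
            have := hTpos z
            nlinarith [hμ'0]
          · have hTzpos : 0 < ‖T z‖ ^ 2 := by positivity
            nlinarith [hTpos z, hμ'0, hcs, h1, h2]
        have hθz : 0 ≤ θ * ‖z‖ := by positivity
        have hexp : ‖T z - θ • z‖ ^ 2 ≤ (θ * ‖z‖) ^ 2 := by
          rw [norm_sub_sq_real]
          have h3 : ⟪T z, θ • z⟫ = θ * ⟪z, T z⟫ := by
            rw [real_inner_smul_right, real_inner_comm]
          have h4 : ‖θ • z‖ ^ 2 = θ ^ 2 * ‖z‖ ^ 2 := by
            rw [norm_smul, Real.norm_eq_abs, abs_of_nonneg hθ0, mul_pow]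
          rw [h3, h4]
          have hμθ : μ (k+1) = 2 * θ := by rw [hθdef]; ring
          rw [hμθ] at hTz2
          nlinarith [hTz2]
        nlinarith [hexp, norm_nonneg (T z - θ • z), hθz]
      -- ## the projected space Eh = P_Phi(E)
      set v : ℕ → H := fun i => proj Φ (η i) with hvdef
      set Eh := span ℝ (v '' Set.Icc 1 k) with hEhdef
      haveI hEhfd : FiniteDimensional ℝ Eh :=
        FiniteDimensional.span_of_finite ℝ ((Set.finite_Icc 1 k).image v)
      have hEhΦ : Eh ≤ Φ := by
        rw [hEhdef, Submodule.span_le]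
        rintro x ⟨i, hi, rfl⟩
        exact proj_mem Φ (η i)
      have hEhmem : ∀ y ∈ Eh, ∃ x ∈ E, proj Φ x = y := by
        intro y hy
        have hmap : Eh = Submodule.map (proj Φ : H →ₗ[ℝ] H) E := by
          rw [hEhdef, hEdef, Submodule.map_span]
          congr 1
          rw [Set.image_image]; rfl
        rw [hmap] at hy
        obtain ⟨x, hx, hxy⟩ := Submodule.mem_map.1 hy
        exact ⟨x, hx, hxy⟩
      have hvEh : ∀ i ∈ Finset.Icc 1 k, v i ∈ Eh := by
        intro i hi
        exact subset_span ⟨i, Set.mem_Icc.2 (Finset.mem_Icc.1 hi), rfl⟩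
      -- orthonormal basis of Eh
      set k' := Module.finrank ℝ Eh with hk'def
      set bE := stdOrthonormalBasis ℝ Eh with hbEdef
      set e : Fin k' → H := fun a => (bE a : H) with hedef
      have he_mem : ∀ a, e a ∈ Eh := fun a => (bE a).2
      have he_on : ∀ a b : Fin k', ⟪e a, e b⟫ = if a = b then (1:ℝ) else 0 := by
        intro a b
        have h1 := bE.orthonormal
        rw [orthonormal_iff_ite] at h1
        have h2 := h1 a b
        rwa [Submodule.coe_inner] at h2
      have he_expand : ∀ y ∈ Eh, y = ∑ a : Fin k', ⟪e a, y⟫ • e a := by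
        intro y hy
        have h1 := bE.sum_repr' (⟨y, hy⟩ : Eh)
        have h2 : ((∑ a : Fin k', (inner ℝ (bE a) (⟨y, hy⟩ : Eh) : ℝ) • bE a : Eh) : H) = y :=
          congrArg Subtype.val h1
        have h3 : ((∑ a : Fin k', (inner ℝ (bE a) (⟨y, hy⟩ : Eh) : ℝ) • bE a : Eh) : H)
            = ∑ a : Fin k', ⟪e a, y⟫ • e a := by
          rw [Submodule.coe_sum]
          refine Finset.sum_congr rfl (fun a _ => ?_)
          rw [SetLike.val_smul]
          congr 1
        exact h2.symm.trans h3
      have he_normsq : ∀ c : Fin k' → ℝ, ‖∑ a : Fin k', c a • e a‖ ^ 2 = ∑ a : Fin k', (c a) ^ 2 := by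
        intro c
        rw [← real_inner_self_eq_norm_sq]
        simp only [sum_inner, inner_sum, real_inner_smul_left, real_inner_smul_right]
        refine Finset.sum_congr rfl (fun a _ => ?_)
        rw [Finset.sum_eq_single a]
        · rw [he_on a a, if_pos rfl]; ring
        · intro b _ hba
          rw [he_on b a, if_neg hba]; ring
        · intro hc; exact absurd (Finset.mem_univ a) hc
      have hprojEh : ∀ x : H, proj Eh x = ∑ a : Fin k', ⟪e a, x⟫ • e a := by
        intro x
        refine proj_unique (Submodule.sum_mem _ (fun a _ =>
          Submodule.smul_mem _ _ (he_mem a))) ?_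
        intro y hy
        rw [he_expand y hy, sum_inner]
        refine Finset.sum_eq_zero (fun b _ => ?_)
        rw [real_inner_smul_left, inner_sub_right, inner_sum]
        have h5 : ∀ a ∈ Finset.univ, ⟪e b, ⟪e a, x⟫ • e a⟫
            = if a = b then ⟪e b, x⟫ else (0:ℝ) := by
          intro a _
          rw [real_inner_smul_right, he_on b a]
          by_cases hab : a = b
          · subst hab; simp
          · rw [if_neg (Ne.symm hab), if_neg hab, mul_zero]
        rw [Finset.sum_congr rfl h5, Finset.sum_ite_eq' Finset.univ b _,
          if_pos (Finset.mem_univ b), sub_self, mul_zero]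
      have hnormEh : ∀ x : H, ‖proj Eh x‖ ^ 2 = ∑ a : Fin k', ⟪e a, x⟫ ^ 2 := by
        intro x
        rw [hprojEh x]
        exact he_normsq _
      have hk'k : k' ≤ k := by
        have h1 : Eh = span ℝ ((Finset.image v (Finset.Icc 1 k) : Finset H) : Set H) := by
          rw [hEhdef, Finset.coe_image, Finset.coe_Icc]
        rw [hk'def, h1]
        refine le_trans (finrank_span_finset_le_card _) ?_
        refine le_trans (Finset.card_image_le) (by rw [Nat.card_Icc]; omega)
      -- ## Step A : Sv ≤ ∑_j ‖γ j - proj Eh (γ j)‖²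
      have hγveq : ∀ j ∈ Finset.Icc 1 n, ∀ i : ℕ, ⟪γ j, η i⟫ = ⟪γ j, v i⟫ := by
        intro j hj i
        have h1 : ⟪γ j, η i - proj Φ (η i)⟫ = 0 := by
          rw [real_inner_comm]
          have h2 := inner_sub_proj Φ (η i) (hγΦ j hj)
          rwa [real_inner_comm] at h2
        have h3 : ⟪γ j, η i⟫ - ⟪γ j, v i⟫ = 0 := by
          rw [hvdef, ← inner_sub_right]
          exact h1
        linarith
      have hIocs : ∀ j ∈ Finset.Ioc k n, j ∈ Finset.Icc 1 n := by
        intro j hj; rw [Finset.mem_Ioc] at hj; rw [Finset.mem_Icc]; omega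
      have hstepA : Sv ≤ ∑ j ∈ Finset.Icc 1 k, ‖γ j - proj Eh (γ j)‖ ^ 2 := by
        have hA1 : ∀ j ∈ Finset.Ioc k n,
            ∑ i ∈ Finset.Icc 1 k, ⟪γ j, η i⟫ ^ 2 ≤ ∑ a : Fin k', ⟪e a, γ j⟫ ^ 2 := by
          intro j hj
          set z := ∑ a : Fin k', ⟪e a, γ j⟫ • e a with hzdef
          have hzEh : z ∈ Eh :=
            Submodule.sum_mem _ (fun a _ => Submodule.smul_mem _ _ (he_mem a))
          have hzΦ : z ∈ Φ := hEhΦ hzEh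
          have hclaim : ∀ i ∈ Finset.Icc 1 k, ⟪γ j, η i⟫ = ⟪z, η i⟫ := by
            intro i hi
            rw [hγveq j (hIocs j hj) i]
            have h6 : ⟪z, η i⟫ = ⟪z, v i⟫ := by
              have h7 : ⟪z, η i - proj Φ (η i)⟫ = 0 := by
                rw [real_inner_comm]
                have h8 := inner_sub_proj Φ (η i) hzΦ
                rwa [real_inner_comm] at h8
              have h9 : ⟪z, η i⟫ - ⟪z, v i⟫ = 0 := by
                rw [hvdef, ← inner_sub_right]; exact h7
              linarith
            rw [h6, hzdef, sum_inner]
            have h10 := he_expand (v i) (hvEh i hi)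
            calc ⟪γ j, v i⟫ = ⟪γ j, ∑ a : Fin k', ⟪e a, v i⟫ • e a⟫ := by rw [← h10]
            _ = ∑ a : Fin k', ⟪e a, v i⟫ * ⟪γ j, e a⟫ := by
                rw [inner_sum]
                exact Finset.sum_congr rfl (fun a _ => by rw [real_inner_smul_right])
            _ = ∑ a : Fin k', ⟪⟪e a, γ j⟫ • e a, v i⟫ := by
                refine Finset.sum_congr rfl (fun a _ => ?_)
                rw [real_inner_smul_left, real_inner_comm (γ j) (e a)]
                ring
          calc ∑ i ∈ Finset.Icc 1 k, ⟪γ j, η i⟫ ^ 2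
              = ∑ i ∈ Finset.Icc 1 k, ⟪η i, z⟫ ^ 2 := by
                refine Finset.sum_congr rfl (fun i hi => ?_)
                rw [hclaim i hi, real_inner_comm]
          _ = ‖proj E z‖ ^ 2 := (hnormE z).symm
          _ ≤ ‖z‖ ^ 2 := by
              have h11 := norm_sq_proj_add E z
              nlinarith [sq_nonneg ‖z - proj E z‖]
          _ = ∑ a : Fin k', ⟪e a, γ j⟫ ^ 2 := by rw [hzdef]; exact he_normsq _
        have hA2 : ∑ j ∈ Finset.Ioc k n, ∑ a : Fin k', ⟪e a, γ j⟫ ^ 2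
            ≤ ∑ j ∈ Finset.Icc 1 k, ‖γ j - proj Eh (γ j)‖ ^ 2 := by
          have hbessel : ∀ a : Fin k',
              ∑ j ∈ Finset.Icc 1 n, ⟪γ j, e a⟫ ^ 2 = 1 := by
            intro a
            have h12 : ‖proj Φ (e a)‖ ^ 2 = 1 := by
              rw [proj_eq_self Φ (hEhΦ (he_mem a))]
              rw [← real_inner_self_eq_norm_sq, he_on a a, if_pos rfl]
            rw [← hnormΦ (e a)] at *
            exact h12
          have hsw1 : ∑ j ∈ Finset.Ioc k n, ∑ a : Fin k', ⟪e a, γ j⟫ ^ 2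
              = ∑ a : Fin k', ∑ j ∈ Finset.Ioc k n, ⟪γ j, e a⟫ ^ 2 := by
            rw [Finset.sum_comm]
            refine Finset.sum_congr rfl (fun a _ => Finset.sum_congr rfl (fun j _ => ?_))
            rw [real_inner_comm]
          have hsw2 : ∀ a : Fin k', ∑ j ∈ Finset.Ioc k n, ⟪γ j, e a⟫ ^ 2
              = 1 - ∑ j ∈ Finset.Icc 1 k, ⟪γ j, e a⟫ ^ 2 := by
            intro a
            have h13 : ∑ j ∈ Finset.Icc 1 n, ⟪γ j, e a⟫ ^ 2
                = ∑ j ∈ Finset.Icc 1 k, ⟪γ j, e a⟫ ^ 2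
                  + ∑ j ∈ Finset.Ioc k n, ⟪γ j, e a⟫ ^ 2 := by
              rw [hsplitIcc, Finset.sum_union hdisj]
            have h14 := hbessel a
            linarith
          have hsw3 : ∑ a : Fin k', ∑ j ∈ Finset.Icc 1 k, ⟪γ j, e a⟫ ^ 2
              = ∑ j ∈ Finset.Icc 1 k, ‖proj Eh (γ j)‖ ^ 2 := by
            rw [Finset.sum_comm]
            refine Finset.sum_congr rfl (fun j _ => ?_)
            rw [hnormEh (γ j)]
            exact Finset.sum_congr rfl (fun a _ => by rw [real_inner_comm])
          have hpyth : ∀ j ∈ Finset.Icc 1 k,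
              ‖γ j - proj Eh (γ j)‖ ^ 2 = 1 - ‖proj Eh (γ j)‖ ^ 2 := by
            intro j hj
            have h15 := norm_sq_proj_add Eh (γ j)
            have h16 : ‖γ j‖ ^ 2 = 1 := hγnorm j (Finset.mem_Icc.2
              ⟨(Finset.mem_Icc.1 hj).1, le_trans (Finset.mem_Icc.1 hj).2 hkn⟩)
            linarith
          rw [hsw1]
          rw [Finset.sum_congr rfl (fun a _ => hsw2 a)]
          rw [Finset.sum_sub_distrib, hsw3]
          rw [Finset.sum_congr rfl hpyth, Finset.sum_sub_distrib]
          simp only [Finset.sum_const, Finset.card_univ, Fintype.card_fin, nsmul_eq_mul, mul_one,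
            Nat.card_Icc]
          have hb1 : ∀ j ∈ Finset.Icc 1 k, ‖proj Eh (γ j)‖ ^ 2 ≤ 1 := by
            intro j hj
            have := hpyth j hj
            nlinarith [sq_nonneg ‖γ j - proj Eh (γ j)‖]
          have hk'r : (k' : ℝ) ≤ (k : ℝ) := by exact_mod_cast hk'k
          have : (k + 1 - 1 : ℕ) = k := by omega
          rw [this]
          linarith
        calc Sv = ∑ j ∈ Finset.Ioc k n, ∑ i ∈ Finset.Icc 1 k, ⟪γ j, η i⟫ ^ 2 := by
              rw [hSdef]; exact Finset.sum_comm
        _ ≤ ∑ j ∈ Finset.Ioc k n, ∑ a : Fin k', ⟪e a, γ j⟫ ^ 2 :=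
              Finset.sum_le_sum hA1
        _ ≤ ∑ j ∈ Finset.Icc 1 k, ‖γ j - proj Eh (γ j)‖ ^ 2 := hA2
      -- ## Step B1 : per-j bound via the residual
      have hxex : ∀ j ∈ Finset.Icc 1 k, ∃ x, x ∈ E ∧ proj Φ x = proj Eh (γ j) := by
        intro j hj
        exact hEhmem _ (proj_mem Eh (γ j))
      choose! xf hxfE hxfeq using hxex
      have hstepB1 : ∀ j ∈ Finset.Icc 1 k,
          gp ^ 2 * ‖γ j - proj Eh (γ j)‖ ^ 2
            ≤ θ ^ 2 * ‖(xf j - proj Φ (xf j)) - proj E (xf j - proj Φ (xf j))‖ ^ 2 := by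
        intro j hj
        have hjn : j ∈ Finset.Icc 1 n := Finset.mem_Icc.2
          ⟨(Finset.mem_Icc.1 hj).1, le_trans (Finset.mem_Icc.1 hj).2 hkn⟩
        set gj := proj Eh (γ j) with hgjdef
        set hX := γ j - gj with hXdef
        set qx := xf j - proj Φ (xf j) with hqxdef
        set w := qx - proj E qx with hwdef
        have hgjEh : gj ∈ Eh := proj_mem _ _
        have hhΦ : hX ∈ Φ := Submodule.sub_mem _ (hγΦ j hjn) (hEhΦ hgjEh)
        have hhEperp : hX ∈ Eᗮ := by
          refine (hEperp_iff _).2 (fun i hi => ?_)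
          have h1 : ⟪v i, hX⟫ = 0 := inner_sub_proj Eh (γ j) (hvEh i hi)
          have h2 : ⟪η i - v i, hX⟫ = 0 := by
            rw [real_inner_comm]
            exact inner_sub_proj Φ (η i) hhΦ
          have h3 : ⟪η i, hX⟫ = ⟪v i, hX⟫ + ⟪η i - v i, hX⟫ := by
            rw [← inner_add_left]
            congr 1
            abel
          rw [h3, h1, h2, add_zero]
        have hwEperp : w ∈ Eᗮ := by
          refine (hEperp_iff _).2 (fun i hi => ?_)
          rw [hwdef]
          exact inner_sub_proj E qx (hηE i hi)
        have hgjγ : ⟪hX, gj⟫ = 0 := by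
          rw [real_inner_comm]
          exact inner_sub_proj Eh (γ j) hgjEh
        have hγdecomp : (γ j : H) = gj + hX := by rw [hXdef]; abel
        have hid1 : lam j * ‖hX‖ ^ 2 = ⟪hX, T (γ j)⟫ := by
          have e1 : ⟪hX, proj Φ (T (γ j))⟫ = ⟪hX, T (γ j)⟫ :=
            inner_proj_left Φ (T (γ j)) hhΦ
          have e2 : proj Φ (T (γ j)) = lam j • γ j :=
            hγeig j (Set.mem_Icc.2 (Finset.mem_Icc.1 hjn))
          have e3 : ⟪hX, γ j⟫ = ‖hX‖ ^ 2 := by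
            rw [hγdecomp, inner_add_right, hgjγ, zero_add, real_inner_self_eq_norm_sq]
          rw [← e1, e2, real_inner_smul_right, e3]
        have hid2 : ⟪hX, T (γ j)⟫ = ⟪hX, T gj⟫ + ⟪hX, T hX⟫ := by
          rw [hγdecomp, map_add, inner_add_right]
        have hlow : (lam j - μ (k+1)) * ‖hX‖ ^ 2 ≤ ⟪hX, T gj⟫ := by
          have h4 := hRay hX hhEperp
          nlinarith [hid1, hid2, h4]
        have hgq : gj = xf j - qx := by
          rw [hgjdef, ← hxfeq j hj, hqxdef]
          abel
        have hqE : proj E qx ∈ E := proj_mem _ _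
        have hqdecomp : gj = (xf j - proj E qx) - w := by
          rw [hgq, hwdef]
          abel
        have hTxE : ∀ y ∈ E, ⟪hX, T y - θ • y⟫ = 0 := by
          intro y hyE
          have h5 : T y - θ • y ∈ E :=
            Submodule.sub_mem _ (hTE y hyE) (Submodule.smul_mem _ _ hyE)
          rw [real_inner_comm]
          exact (Submodule.mem_orthogonal E hX).1 hhEperp _ h5
        have hxfsubE : xf j - proj E qx ∈ E := Submodule.sub_mem _ (hxfE j hj) hqE
        have hup : ⟪hX, T gj⟫ = - ⟪hX, T w - θ • w⟫ := by
          have h6 : ⟪hX, T gj⟫ = ⟪hX, T gj - θ • gj⟫ := by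
            rw [inner_sub_right, real_inner_smul_right, hgjγ, mul_zero, sub_zero]
          have h7 : T gj - θ • gj
              = (T (xf j - proj E qx) - θ • (xf j - proj E qx)) - (T w - θ • w) := by
            rw [hqdecomp, map_sub, smul_sub]
            abel
          rw [h6, h7, inner_sub_right, hTxE _ hxfsubE]
          ring
        have hCS : ⟪hX, T gj⟫ ≤ ‖hX‖ * (θ * ‖w‖) := by
          rw [hup]
          calc - ⟪hX, T w - θ • w⟫ ≤ |⟪hX, T w - θ • w⟫| := neg_le_abs _
          _ ≤ ‖hX‖ * ‖T w - θ • w‖ := abs_real_inner_le_norm _ _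
          _ ≤ ‖hX‖ * (θ * ‖w‖) :=
              mul_le_mul_of_nonneg_left (hcontr w hwEperp) (norm_nonneg _)
        have hgple : gp ≤ lam j - μ (k+1) := by
          rw [hgpdef]
          have h8 := hlam j (Set.mem_Icc.2 ⟨(Finset.mem_Icc.1 hj).1,
            le_trans (Finset.mem_Icc.1 hj).2 hkn⟩) k (Set.mem_Icc.2 ⟨hk1, hkn⟩)
            (Finset.mem_Icc.1 hj).2
          linarith
        have hfinal : gp * ‖hX‖ ^ 2 ≤ θ * ‖w‖ * ‖hX‖ := by
          calc gp * ‖hX‖ ^ 2 ≤ (lam j - μ (k+1)) * ‖hX‖ ^ 2 :=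
                mul_le_mul_of_nonneg_right hgple (sq_nonneg _)
          _ ≤ ⟪hX, T gj⟫ := hlow
          _ ≤ ‖hX‖ * (θ * ‖w‖) := hCS
          _ = θ * ‖w‖ * ‖hX‖ := by ring
        by_cases hh0 : ‖hX‖ = 0
        · rw [hh0]
          have : (0:ℝ) ≤ θ ^ 2 * ‖w‖ ^ 2 := by positivity
          nlinarith [this]
        · have hh0' : 0 < ‖hX‖ := lt_of_le_of_ne (norm_nonneg _) (Ne.symm hh0)
          have h9 : gp * ‖hX‖ ≤ θ * ‖w‖ := by
            have h10 : gp * ‖hX‖ * ‖hX‖ ≤ θ * ‖w‖ * ‖hX‖ := by nlinarith [hfinal]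
            exact le_of_mul_le_mul_right h10 hh0'
          nlinarith [h9, norm_nonneg w, hθ0, hh0'.le, hgp0, mul_nonneg hgp0.le (norm_nonneg hX)]
      -- ## Step B3 : ∑_j ‖w j‖² ≤ R
      have hstepB3 : ∑ j ∈ Finset.Icc 1 k,
          ‖(xf j - proj Φ (xf j)) - proj E (xf j - proj Φ (xf j))‖ ^ 2 ≤ R := by
        -- finrank E = k
        have honE : Orthonormal ℝ (fun i : (Set.Icc (1:ℕ) k) => η (i : ℕ)) := by
          rw [orthonormal_iff_ite]
          intro i j
          have hmi := Set.mem_Icc.1 i.2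
          have hmj := Set.mem_Icc.1 j.2
          have h1 := hη' (i:ℕ) (Finset.mem_Icc.2 hmi) (j:ℕ) (Finset.mem_Icc.2 hmj)
          rw [h1]
          by_cases hij : i = j
          · rw [if_pos hij, if_pos (by rw [hij])]
          · rw [if_neg (fun hc => hij (Subtype.ext hc)), if_neg hij]
        have hmk : Module.finrank ℝ E = k := by
          rw [hEdef, show η '' Set.Icc 1 k
            = Set.range (fun i : (Set.Icc (1:ℕ) k) => η (i : ℕ)) from (Set.image_eq_range _ _)]
          rw [finrank_span_eq_card honE.linearIndependent]
          rw [← Set.toFinset_card, Set.toFinset_Icc, Nat.card_Icc]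
          omega
        -- the operator Qop on E
        set qmap : H →L[ℝ] H := ContinuousLinearMap.id ℝ H - proj Φ with hqmapdef
        have hqmap : ∀ x : H, qmap x = x - proj Φ x := fun x => rfl
        set Qop : ↥E →ₗ[ℝ] ↥E :=
          { toFun := fun x => ⟨proj E (qmap (x : H)), proj_mem _ _⟩,
            map_add' := by
              intro a b
              apply Subtype.ext
              simp [map_add],
            map_smul' := by
              intro c a
              apply Subtype.ext
              simp [map_smul] } with hQdef
        have hqinner : ∀ x y : H, ⟪qmap x, y⟫ = ⟪qmap x, qmap y⟫ := by
          intro x y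
          have h1 : ⟪qmap x, proj Φ y⟫ = 0 := by
            rw [real_inner_comm, hqmap]
            exact inner_sub_proj Φ x (proj_mem Φ y)
          have h2 : proj Φ y + qmap y = y := by rw [hqmap]; abel
          calc ⟪qmap x, y⟫ = ⟪qmap x, proj Φ y + qmap y⟫ := by rw [h2]
          _ = ⟪qmap x, qmap y⟫ := by rw [inner_add_right, h1, zero_add]
        have hprojinner : ∀ z : H, ∀ y ∈ E, ⟪proj E z, y⟫ = ⟪z, y⟫ := by
          intro z y hy
          rw [real_inner_comm, inner_proj_left E z hy, real_inner_comm]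
        have hQsym : Qop.IsSymmetric := by
          intro x y
          have h1 : ⟪(Qop x : H), (y : H)⟫ = ⟪qmap (x : H), qmap (y : H)⟫ := by
            have := hprojinner (qmap (x:H)) (y:H) y.2
            calc ⟪(Qop x : H), (y : H)⟫ = ⟪proj E (qmap (x:H)), (y:H)⟫ := rfl
            _ = ⟪qmap (x:H), (y:H)⟫ := this
            _ = ⟪qmap (x:H), qmap (y:H)⟫ := hqinner _ _
          have h2 : ⟪(x : H), (Qop y : H)⟫ = ⟪qmap (x : H), qmap (y : H)⟫ := by
            calc ⟪(x:H), (Qop y : H)⟫ = ⟪(Qop y : H), (x:H)⟫ := real_inner_comm _ _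
            _ = ⟪qmap (y:H), qmap (x:H)⟫ := by
                have := hprojinner (qmap (y:H)) (x:H) x.2
                calc ⟪(Qop y : H), (x:H)⟫ = ⟪proj E (qmap (y:H)), (x:H)⟫ := rfl
                _ = ⟪qmap (y:H), (x:H)⟫ := this
                _ = ⟪qmap (y:H), qmap (x:H)⟫ := hqinner _ _
            _ = ⟪qmap (x:H), qmap (y:H)⟫ := real_inner_comm _ _
          exact h1.trans h2.symm
        set fb := hQsym.eigenvectorBasis hmk with hfbdef
        set qa : Fin k → ℝ := hQsym.eigenvalues hmk with hqadef
        set f : Fin k → H := fun a => (fb a : H) with hfdef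
        have hf_mem : ∀ a, f a ∈ E := fun a => (fb a).2
        have hf_on : ∀ a b : Fin k, ⟪f a, f b⟫ = if a = b then (1:ℝ) else 0 := by
          intro a b
          have h1 := fb.orthonormal
          rw [orthonormal_iff_ite] at h1
          have h2 := h1 a b
          rwa [Submodule.coe_inner] at h2
        have hf_expand : ∀ y ∈ E, y = ∑ a : Fin k, ⟪f a, y⟫ • f a := by
          intro y hy
          have h1 := fb.sum_repr' (⟨y, hy⟩ : E)
          have h2 : ((∑ a : Fin k, (inner ℝ (fb a) (⟨y, hy⟩ : E) : ℝ) • fb a : E) : H) = y :=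
            congrArg Subtype.val h1
          have h3 : ((∑ a : Fin k, (inner ℝ (fb a) (⟨y, hy⟩ : E) : ℝ) • fb a : E) : H)
              = ∑ a : Fin k, ⟪f a, y⟫ • f a := by
            rw [Submodule.coe_sum]
            refine Finset.sum_congr rfl (fun a _ => ?_)
            rw [SetLike.val_smul]
            congr 1
          exact h2.symm.trans h3
        have hf_normsq : ∀ c : Fin k → ℝ,
            ‖∑ a : Fin k, c a • f a‖ ^ 2 = ∑ a : Fin k, (c a) ^ 2 := by
          intro c
          rw [← real_inner_self_eq_norm_sq]
          simp only [sum_inner, inner_sum, real_inner_smul_left, real_inner_smul_right]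
          refine Finset.sum_congr rfl (fun a _ => ?_)
          rw [Finset.sum_eq_single a]
          · rw [hf_on a a, if_pos rfl]; ring
          · intro b _ hba
            rw [hf_on b a, if_neg hba]; ring
          · intro hc; exact absurd (Finset.mem_univ a) hc
        have hQeig : ∀ a : Fin k, proj E (qmap (f a)) = qa a • f a := by
          intro a
          have h1 := hQsym.apply_eigenvectorBasis hmk a
          calc proj E (qmap (f a)) = ((Qop (fb a) : E) : H) := rfl
          _ = (((hQsym.eigenvalues hmk a : ℝ) • fb a : E) : H) := by rw [h1]; norm_cast
          _ = qa a • f a := rfl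
        have hqf_inner : ∀ a b : Fin k,
            ⟪qmap (f a), qmap (f b)⟫ = if a = b then qa a else 0 := by
          intro a b
          rw [← hqinner]
          have h1 : ⟪qmap (f a), f b⟫ = ⟪proj E (qmap (f a)), f b⟫ :=
            (hprojinner _ _ (hf_mem b)).symm
          rw [h1, hQeig a, real_inner_smul_left, hf_on a b]
          by_cases hab : a = b
          · rw [if_pos hab, if_pos hab, mul_one]
          · rw [if_neg hab, if_neg hab, mul_zero]
        have hqX : ∀ c : Fin k → ℝ,
            ‖qmap (∑ a : Fin k, c a • f a)‖ ^ 2 = ∑ a : Fin k, qa a * (c a) ^ 2 := by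
          intro c
          rw [map_sum, ← real_inner_self_eq_norm_sq]
          simp only [map_smul, sum_inner, inner_sum, real_inner_smul_left, real_inner_smul_right]
          refine Finset.sum_congr rfl (fun a _ => ?_)
          rw [Finset.sum_eq_single a]
          · rw [hqf_inner a a, if_pos rfl]; ring
          · intro b _ hba
            rw [hqf_inner b a, if_neg hba]; ring
          · intro hc; exact absurd (Finset.mem_univ a) hc
        have hprojqX : ∀ c : Fin k → ℝ,
            proj E (qmap (∑ a : Fin k, c a • f a)) = ∑ a : Fin k, (qa a * c a) • f a := by
          intro c
          rw [map_sum, map_sum]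
          refine Finset.sum_congr rfl (fun a _ => ?_)
          rw [map_smul, map_smul, hQeig a, smul_smul, mul_comm]
        have hwnorm : ∀ c : Fin k → ℝ,
            ‖qmap (∑ a : Fin k, c a • f a) - proj E (qmap (∑ a : Fin k, c a • f a))‖ ^ 2
              = ∑ a : Fin k, (qa a - (qa a) ^ 2) * (c a) ^ 2 := by
          intro c
          have h1 := norm_sq_proj_add E (qmap (∑ a : Fin k, c a • f a))
          have h2 : ‖proj E (qmap (∑ a : Fin k, c a • f a))‖ ^ 2
              = ∑ a : Fin k, (qa a * c a) ^ 2 := by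
            rw [hprojqX]; exact hf_normsq _
          have h3 : ∑ a : Fin k, (qa a - (qa a) ^ 2) * (c a) ^ 2
              = (∑ a : Fin k, qa a * (c a) ^ 2) - ∑ a : Fin k, (qa a * c a) ^ 2 := by
            rw [← Finset.sum_sub_distrib]
            exact Finset.sum_congr rfl (fun a _ => by ring)
          rw [h3, ← hqX c, ← h2]
          linarith
        have hgram : ∀ t : ℕ → ℝ,
            ∑ a : Fin k, (1 - qa a)
                * (∑ j ∈ Finset.Icc 1 k, t j * ⟪f a, xf j⟫) ^ 2
              ≤ ∑ j ∈ Finset.Icc 1 k, (t j) ^ 2 := by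
          intro t
          set X := ∑ j ∈ Finset.Icc 1 k, t j • xf j with hXd
          have hXE : X ∈ E :=
            Submodule.sum_mem _ (fun j hj => Submodule.smul_mem _ _ (hxfE j hj))
          have hc : ∀ a : Fin k, ⟪f a, X⟫ = ∑ j ∈ Finset.Icc 1 k, t j * ⟪f a, xf j⟫ := by
            intro a
            rw [hXd, inner_sum]
            exact Finset.sum_congr rfl (fun j _ => by rw [real_inner_smul_right])
          have hXcoord : X = ∑ a : Fin k,
              (∑ j ∈ Finset.Icc 1 k, t j * ⟪f a, xf j⟫) • f a := by
            calc X = ∑ a : Fin k, ⟪f a, X⟫ • f a := hf_expand X hXE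
            _ = _ := Finset.sum_congr rfl (fun a _ => by rw [hc a])
          have h2 : ‖X‖ ^ 2
              = ∑ a : Fin k, (∑ j ∈ Finset.Icc 1 k, t j * ⟪f a, xf j⟫) ^ 2 := by
            calc ‖X‖ ^ 2 = ‖∑ a : Fin k,
                (∑ j ∈ Finset.Icc 1 k, t j * ⟪f a, xf j⟫) • f a‖ ^ 2 := by rw [← hXcoord]
            _ = _ := hf_normsq _
          have h3 : ‖qmap X‖ ^ 2
              = ∑ a : Fin k, qa a * (∑ j ∈ Finset.Icc 1 k, t j * ⟪f a, xf j⟫) ^ 2 := by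
            calc ‖qmap X‖ ^ 2 = ‖qmap (∑ a : Fin k,
                (∑ j ∈ Finset.Icc 1 k, t j * ⟪f a, xf j⟫) • f a)‖ ^ 2 := by rw [← hXcoord]
            _ = _ := hqX _
          have h4 : ‖proj Φ X‖ ^ 2 = ‖X‖ ^ 2 - ‖qmap X‖ ^ 2 := by
            have h5 := norm_sq_proj_add Φ X
            have h6 : ‖X - proj Φ X‖ = ‖qmap X‖ := by rw [hqmap]
            rw [← h6]
            linarith
          have h7 : proj Φ X = proj Eh (∑ j ∈ Finset.Icc 1 k, t j • γ j) := by
            rw [hXd, map_sum, map_sum]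
            refine Finset.sum_congr rfl (fun j hj => ?_)
            rw [map_smul, map_smul, hxfeq j hj]
          have h8 : ‖proj Eh (∑ j ∈ Finset.Icc 1 k, t j • γ j)‖ ^ 2
              ≤ ‖∑ j ∈ Finset.Icc 1 k, t j • γ j‖ ^ 2 := by
            have h9 := norm_sq_proj_add Eh (∑ j ∈ Finset.Icc 1 k, t j • γ j)
            nlinarith [sq_nonneg ‖(∑ j ∈ Finset.Icc 1 k, t j • γ j)
              - proj Eh (∑ j ∈ Finset.Icc 1 k, t j • γ j)‖]
          have h10 : ‖∑ j ∈ Finset.Icc 1 k, t j • γ j‖ ^ 2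
              = ∑ j ∈ Finset.Icc 1 k, (t j) ^ 2 :=
            norm_sq_sum_orthonormal _ _ hγk t
          have h11 : ∑ a : Fin k, (1 - qa a)
              * (∑ j ∈ Finset.Icc 1 k, t j * ⟪f a, xf j⟫) ^ 2
              = ‖X‖ ^ 2 - ‖qmap X‖ ^ 2 := by
            rw [h2, h3, ← Finset.sum_sub_distrib]
            exact Finset.sum_congr rfl (fun a _ => by ring)
          rw [h11, ← h4, h7]
          rw [← h10]
          exact h8
        have hqa0 : ∀ a : Fin k, 0 ≤ qa a := by
          intro a
          have h1 := hqf_inner a a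
          rw [if_pos rfl] at h1
          rw [← h1]
          exact real_inner_self_nonneg
        have hqa1 : ∀ a : Fin k, qa a ≤ 1 := by
          intro a
          have h1 := hqf_inner a a
          rw [if_pos rfl, real_inner_self_eq_norm_sq] at h1
          have h2 := norm_sq_proj_add Φ (f a)
          have h3 : ‖f a‖ ^ 2 = 1 := by
            rw [← real_inner_self_eq_norm_sq, hf_on a a, if_pos rfl]
          have h6 : ‖f a - proj Φ (f a)‖ = ‖qmap (f a)‖ := by rw [hqmap]
          rw [h6] at h2
          linarith [sq_nonneg ‖proj Φ (f a)‖]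
        have hcol : ∀ a : Fin k,
            (1 - qa a) * (∑ j ∈ Finset.Icc 1 k, ⟪f a, xf j⟫ ^ 2) ≤ 1 := by
          intro a
          have h1 := hgram (fun j => ⟪f a, xf j⟫)
          have h2 : (1 - qa a) * (∑ j ∈ Finset.Icc 1 k, ⟪f a, xf j⟫ * ⟪f a, xf j⟫) ^ 2
              ≤ ∑ j ∈ Finset.Icc 1 k, ⟪f a, xf j⟫ ^ 2 := by
            refine le_trans ?_ h1
            refine Finset.single_le_sum (f := fun b : Fin k => (1 - qa b)
              * (∑ j ∈ Finset.Icc 1 k, ⟪f a, xf j⟫ * ⟪f b, xf j⟫) ^ 2) ?_ (Finset.mem_univ a)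
            intro b _
            have hb1 := hqa1 b
            exact mul_nonneg (by linarith) (sq_nonneg _)
          have h3 : ∑ j ∈ Finset.Icc 1 k, ⟪f a, xf j⟫ * ⟪f a, xf j⟫
              = ∑ j ∈ Finset.Icc 1 k, ⟪f a, xf j⟫ ^ 2 :=
            Finset.sum_congr rfl (fun j _ => by ring)
          rw [h3] at h2
          set Sa := ∑ j ∈ Finset.Icc 1 k, ⟪f a, xf j⟫ ^ 2 with hSadef
          have hSa0 : 0 ≤ Sa := Finset.sum_nonneg (fun j _ => sq_nonneg _)
          rcases eq_or_lt_of_le hSa0 with h | h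
          · rw [← h, mul_zero]
            linarith
          · have h4 : (1 - qa a) * Sa * Sa ≤ 1 * Sa := by nlinarith [h2]
            have h5 := le_of_mul_le_mul_right h4 h
            linarith [h5]
        -- trace identity
        have hprojE_f : ∀ x : H, proj E x = ∑ a : Fin k, ⟪f a, x⟫ • f a := by
          intro x
          refine proj_unique (Submodule.sum_mem _ (fun a _ =>
            Submodule.smul_mem _ _ (hf_mem a))) ?_
          intro y hy
          rw [hf_expand y hy, sum_inner]
          refine Finset.sum_eq_zero (fun b _ => ?_)
          rw [real_inner_smul_left, inner_sub_right, inner_sum]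
          have h5 : ∀ a ∈ Finset.univ, ⟪f b, ⟪f a, x⟫ • f a⟫
              = if a = b then ⟪f b, x⟫ else (0:ℝ) := by
            intro a _
            rw [real_inner_smul_right, hf_on b a]
            by_cases hab : a = b
            · subst hab; simp
            · rw [if_neg (Ne.symm hab), if_neg hab, mul_zero]
          rw [Finset.sum_congr rfl h5, Finset.sum_ite_eq' Finset.univ b _,
            if_pos (Finset.mem_univ b), sub_self, mul_zero]
        have hnormE_f : ∀ x : H, ‖proj E x‖ ^ 2 = ∑ a : Fin k, ⟪f a, x⟫ ^ 2 := by
          intro x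
          rw [hprojE_f x]
          exact hf_normsq _
        have htrace : ∑ a : Fin k, qa a = R := by
          have h1 : ∀ a : Fin k, qa a = 1 - ∑ j ∈ Finset.Icc 1 n, ⟪γ j, f a⟫ ^ 2 := by
            intro a
            have e1 := hqf_inner a a
            rw [if_pos rfl, real_inner_self_eq_norm_sq] at e1
            have e2 := norm_sq_proj_add Φ (f a)
            have e3 : ‖f a‖ ^ 2 = 1 := by
              rw [← real_inner_self_eq_norm_sq, hf_on a a, if_pos rfl]
            have e4 : ‖f a - proj Φ (f a)‖ = ‖qmap (f a)‖ := by rw [hqmap]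
            have e5 := hnormΦ (f a)
            rw [e4] at e2
            linarith [e1, e2, e3, e5]
          have h3 : ∑ a : Fin k, ∑ j ∈ Finset.Icc 1 n, ⟪γ j, f a⟫ ^ 2
              = ∑ i ∈ Finset.Icc 1 k, ∑ j ∈ Finset.Icc 1 n, ⟪γ j, η i⟫ ^ 2 := by
            rw [Finset.sum_comm]
            have h4 : ∀ j ∈ Finset.Icc 1 n, ∑ a : Fin k, ⟪γ j, f a⟫ ^ 2
                = ∑ i ∈ Finset.Icc 1 k, ⟪γ j, η i⟫ ^ 2 := by
              intro j _
              have e6 : ∑ a : Fin k, ⟪γ j, f a⟫ ^ 2 = ∑ a : Fin k, ⟪f a, γ j⟫ ^ 2 :=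
                Finset.sum_congr rfl (fun a _ => by rw [real_inner_comm])
              have e7 : ∑ i ∈ Finset.Icc 1 k, ⟪γ j, η i⟫ ^ 2
                  = ∑ i ∈ Finset.Icc 1 k, ⟪η i, γ j⟫ ^ 2 :=
                Finset.sum_congr rfl (fun i _ => by rw [real_inner_comm])
              rw [e6, e7, ← hnormE_f, ← hnormE]
            rw [Finset.sum_congr rfl h4, Finset.sum_comm]
          have h5 : ∑ a : Fin k, qa a
              = (k : ℝ) - ∑ a : Fin k, ∑ j ∈ Finset.Icc 1 n, ⟪γ j, f a⟫ ^ 2 := by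
            rw [Finset.sum_congr rfl (fun a _ => h1 a), Finset.sum_sub_distrib]
            simp
          have h6 : R = (k : ℝ) - ∑ i ∈ Finset.Icc 1 k,
              ∑ j ∈ Finset.Icc 1 n, ⟪γ j, η i⟫ ^ 2 := by
            rw [hRdef, Finset.sum_sub_distrib]
            simp only [Finset.sum_const, nsmul_eq_mul, mul_one, Nat.card_Icc]
            have : (k + 1 - 1 : ℕ) = k := by omega
            rw [this]
          rw [h5, h3, h6]
        -- put everything together
        have hwj : ∀ j ∈ Finset.Icc 1 k,
            ‖(xf j - proj Φ (xf j)) - proj E (xf j - proj Φ (xf j))‖ ^ 2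
              = ∑ a : Fin k, (qa a - (qa a) ^ 2) * ⟪f a, xf j⟫ ^ 2 := by
          intro j hj
          have h1 := hwnorm (fun a => ⟪f a, xf j⟫)
          rw [← hf_expand (xf j) (hxfE j hj)] at h1
          rw [show xf j - proj Φ (xf j) = qmap (xf j) from (hqmap _).symm]
          exact h1
        calc ∑ j ∈ Finset.Icc 1 k,
            ‖(xf j - proj Φ (xf j)) - proj E (xf j - proj Φ (xf j))‖ ^ 2
            = ∑ j ∈ Finset.Icc 1 k, ∑ a : Fin k,
                (qa a - (qa a) ^ 2) * ⟪f a, xf j⟫ ^ 2 :=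
              Finset.sum_congr rfl hwj
        _ = ∑ a : Fin k, qa a
              * ((1 - qa a) * ∑ j ∈ Finset.Icc 1 k, ⟪f a, xf j⟫ ^ 2) := by
              rw [Finset.sum_comm]
              refine Finset.sum_congr rfl (fun a _ => ?_)
              rw [Finset.mul_sum, Finset.mul_sum]
              exact Finset.sum_congr rfl (fun j _ => by ring)
        _ ≤ ∑ a : Fin k, qa a * 1 :=
              Finset.sum_le_sum (fun a _ =>
                mul_le_mul_of_nonneg_left (hcol a) (hqa0 a))
        _ = ∑ a : Fin k, qa a := by
              exact Finset.sum_congr rfl (fun a _ => by ring)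
        _ = R := htrace
      -- ## combine
      calc Sv * gp ^ 2
          ≤ (∑ j ∈ Finset.Icc 1 k, ‖γ j - proj Eh (γ j)‖ ^ 2) * gp ^ 2 :=
            mul_le_mul_of_nonneg_right hstepA (sq_nonneg gp)
      _ = ∑ j ∈ Finset.Icc 1 k, gp ^ 2 * ‖γ j - proj Eh (γ j)‖ ^ 2 := by
            rw [Finset.sum_mul]
            exact Finset.sum_congr rfl (fun j _ => by ring)
      _ ≤ ∑ j ∈ Finset.Icc 1 k,
            θ ^ 2 * ‖(xf j - proj Φ (xf j)) - proj E (xf j - proj Φ (xf j))‖ ^ 2 :=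
            Finset.sum_le_sum hstepB1
      _ = θ ^ 2 * ∑ j ∈ Finset.Icc 1 k,
            ‖(xf j - proj Φ (xf j)) - proj E (xf j - proj Φ (xf j))‖ ^ 2 := by
            rw [Finset.mul_sum]
      _ ≤ θ ^ 2 * R := mul_le_mul_of_nonneg_left hstepB3 (sq_nonneg θ)
    rw [hkey0, hdFEΦ]
    have hgpne : gp ≠ 0 := ne_of_gt hgp0
    have hfrac : (1 + 1 / 4 * (μ (k + 1) / gp) ^ 2) * R = R + θ ^ 2 / gp ^ 2 * R := by
      rw [hθdef]
      field_simp
      ring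
    rw [hfrac]
    have h2 : Sv ≤ θ ^ 2 / gp ^ 2 * R := by
      rw [div_mul_eq_mul_div, le_div_iff₀ (by positivity : (0:ℝ) < gp ^ 2)]
      exact hmain
    linarith

end
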